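/- arXiv:1408.0282 — 2 statements merged into one kernel-verified Lean document; each statement's English description precedes it below -/
import Mathlib

section
/- Let $\gamma_i$ be the LST of the cycle time $C_i$ with mean $E[C] > 0$, and let $(C_{iP}, C_{iR})$ have joint LST $E[e^{-\omega_P C_{iP} - \omega_R C_{iR}}] = \frac{\gamma_i(\omega_P) - \gamma_i(\omega_R)}{(\omega_R - \omega_P)E[C]}$. Let $L_H(\cdot)$ and $L_k(\cdot)$ be independent Poisson processes of rates $\lambda_H \geq 0$ and $\lambda_{ik} > 0$, independent of $(C_{iP}, C_{iR})$, and let $\{B_{H,j}\}$, $\{B_{ik,j}\}$ be i.i.d. sequences with LSTs $\beta_H, \beta_{ik}$, independent of everything else. Then for $\omega > 0$ with $\omega \neq \lambda_{ik}(1-\beta_{ik}(\omega))$: $E\left[e^{-\omega\left(C_{iR} + \sum_{j=1}^{L_H(C_{iP}+C_{iR})} B_{H,j} + \sum_{j=1}^{L_k(C_{iP})} B_{ik,j}\right)}\right] = \frac{\gamma_i(\lambda_H(1-\beta_H(\omega)) + \lambda_{ik}(1-\beta_{ik}(\omega))) - \gamma_i(\omega + \lambda_H(1-\beta_H(\omega)))}{[\omega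 - \lambda_{ik}(1-\beta_{ik}(\omega))] E[C]}$. -/
open MeasureTheory Finset
open scoped ENNReal NNReal

lemma myexp_tsum (c : ℝ) : ∑' m : ℕ, c ^ m / (Nat.factorial m : ℝ) = Real.exp c := by
  rw [Real.exp_eq_exp_ℝ, NormedSpace.exp_eq_tsum_div]

lemma pois_norm_summable (β a : ℝ) :
    Summable (fun m : ℕ => ‖β ^ m * (Real.exp (-a) * a ^ m / (Nat.factorial m : ℝ))‖) := by
  have h := (Real.summable_pow_div_factorial |β * a|).mul_left (Real.exp (-a))
  refine h.congr fun m => ?_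
  rw [Real.norm_eq_abs, abs_mul (β ^ m), abs_div, abs_mul (Real.exp (-a)), abs_pow β, abs_pow a,
    abs_of_pos (Real.exp_pos _), Nat.abs_cast, abs_mul β a, mul_pow]
  ring

lemma pois_tsum (β a : ℝ) :
    ∑' m : ℕ, β ^ m * (Real.exp (-a) * a ^ m / (Nat.factorial m : ℝ))
      = Real.exp (-(a * (1 - β))) := by
  have h : ∀ m : ℕ, β ^ m * (Real.exp (-a) * a ^ m / (Nat.factorial m : ℝ))
      = Real.exp (-a) * ((β * a) ^ m / (Nat.factorial m : ℝ)) := by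
    intro m; rw [mul_pow]; ring
  rw [tsum_congr h, tsum_mul_left, myexp_tsum, ← Real.exp_add]
  congr 1; ring

lemma pois_prod_summable (β₁ β₂ a b : ℝ) :
    Summable (fun p : ℕ × ℕ =>
      (β₁ ^ p.1 * (Real.exp (-a) * a ^ p.1 / (Nat.factorial p.1 : ℝ))) *
      (β₂ ^ p.2 * (Real.exp (-b) * b ^ p.2 / (Nat.factorial p.2 : ℝ)))) :=
  summable_mul_of_summable_norm (R := ℝ)
    (f := fun m : ℕ => β₁ ^ m * (Real.exp (-a) * a ^ m / (Nat.factorial m : ℝ)))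
    (g := fun n : ℕ => β₂ ^ n * (Real.exp (-b) * b ^ n / (Nat.factorial n : ℝ)))
    (pois_norm_summable β₁ a) (pois_norm_summable β₂ b)

lemma pois_prod_tsum (β₁ β₂ a b : ℝ) :
    ∑' p : ℕ × ℕ,
      (β₁ ^ p.1 * (Real.exp (-a) * a ^ p.1 / (Nat.factorial p.1 : ℝ))) *
      (β₂ ^ p.2 * (Real.exp (-b) * b ^ p.2 / (Nat.factorial p.2 : ℝ)))
      = Real.exp (-(a * (1 - β₁))) * Real.exp (-(b * (1 - β₂))) := by
  rw [← tsum_mul_tsum_of_summable_norm (pois_norm_summable β₁ a) (pois_norm_summable β₂ b),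
    pois_tsum, pois_tsum]

lemma myexp_le_one {x : ℝ} (hx : x ≤ 0) : Real.exp x ≤ 1 := by
  simpa using Real.exp_le_exp.mpr hx

lemma pois_nonneg {a : ℝ} (ha : 0 ≤ a) (m : ℕ) :
    0 ≤ Real.exp (-a) * a ^ m / (Nat.factorial m : ℝ) := by positivity

lemma pois_le_one {a : ℝ} (ha : 0 ≤ a) (m : ℕ) :
    Real.exp (-a) * a ^ m / (Nat.factorial m : ℝ) ≤ 1 := by
  have h1 : a ^ m / (Nat.factorial m : ℝ) ≤ Real.exp a := by
    rw [← myexp_tsum a]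
    exact Summable.le_tsum (Real.summable_pow_div_factorial a) m fun n _ => by positivity
  have h2 : Real.exp (-a) * (a ^ m / (Nat.factorial m : ℝ)) ≤ Real.exp (-a) * Real.exp a :=
    mul_le_mul_of_nonneg_left h1 (Real.exp_pos _).le
  rw [← Real.exp_add] at h2
  simpa [mul_div_assoc] using h2


/-- Waiting-time LST at a gated priority queue.  `(CP, CR)` are the past and residual cycle
times, with joint LST `(γ ωP - γ ωR)/((ωR - ωP) E C)`.  `Lh t` and `Lk t` are independent
Poisson processes of rates `lH` and `lK`, independent of `(CP, CR)` (expressed through the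
conditional Poisson law of the counts `Lh (CP + CR)` and `Lk CP` given `(CP, CR)`), and
`BH j`, `BK j` are i.i.d. sequences with LSTs `βH, βK` independent of everything else
(expressed through the conditional factorization of their compound sums).  Then the LST of
`CR + ∑_{j < Lh (CP+CR)} BH j + ∑_{j < Lk CP} BK j` is
`(γ (lH (1-βH ω) + lK (1-βK ω)) - γ (ω + lH (1-βH ω))) / ((ω - lK (1-βK ω)) E C)`. -/
theorem stmt_13 {Ω : Type*} [MeasurableSpace Ω] (μ : Measure Ω) [IsProbabilityMeasure μ]
    (CP CR : Ω → ℝ) (hCP : Measurable CP) (hCR : Measurable CR)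
    (hCPnn : ∀ x, 0 ≤ CP x) (hCRnn : ∀ x, 0 ≤ CR x)
    (EC : ℝ) (hEC : 0 < EC)
    (γ : ℝ → ℝ)
    -- joint LST of past and residual cycle time
    (hjoint : ∀ ωP ωR : ℝ, 0 ≤ ωP → 0 ≤ ωR → ωP ≠ ωR →
      ∫ x, Real.exp (-ωP * CP x - ωR * CR x) ∂μ = (γ ωP - γ ωR) / ((ωR - ωP) * EC))
    (lH lK : ℝ) (hlH : 0 ≤ lH) (hlK : 0 < lK)
    (Lh Lk : ℝ → Ω → ℕ) (BH BK : ℕ → Ω → ℝ)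
    (hLh : ∀ t, Measurable (Lh t)) (hLk : ∀ t, Measurable (Lk t))
    (hBH : ∀ j, Measurable (BH j)) (hBK : ∀ j, Measurable (BK j))
    (hBHnn : ∀ j x, 0 ≤ BH j x) (hBKnn : ∀ j x, 0 ≤ BK j x)
    (βH βK : ℝ → ℝ)
    -- common LSTs of the i.i.d. service-time sequences
    (hβH : ∀ (j : ℕ) (w : ℝ), 0 ≤ w → ∫ x, Real.exp (-w * BH j x) ∂μ = βH w)
    (hβK : ∀ (j : ℕ) (w : ℝ), 0 ≤ w → ∫ x, Real.exp (-w * BK j x) ∂μ = βK w)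
    -- `Lh`, `Lk` are independent Poisson processes of rates `lH`, `lK`, independent of
    -- `(CP, CR)`: conditionally on `(CP, CR)`, the counts `Lh (CP + CR)` and `Lk CP` are
    -- independent Poisson with parameters `lH (CP + CR)` and `lK CP`
    (hPoisson : ∀ (m n : ℕ) (g : ℝ → ℝ → ℝ), Measurable (Function.uncurry g) →
      (∀ t u, 0 ≤ g t u ∧ g t u ≤ 1) →
      ∫ x in {x | Lh (CP x + CR x) x = m ∧ Lk (CP x) x = n}, g (CP x) (CR x) ∂μ =
        ∫ x, g (CP x) (CR x) *
          (Real.exp (-(lH * (CP x + CR x))) * (lH * (CP x + CR x)) ^ m / m.factorial) *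
          (Real.exp (-(lK * CP x)) * (lK * CP x) ^ n / n.factorial) ∂μ)
    -- the service times are independent of everything else and i.i.d.: conditionally on
    -- the counts, the compound sums factorize through the LSTs `βH`, `βK`
    (hBindep : ∀ (m n : ℕ) (w : ℝ), 0 ≤ w →
      ∫ x in {x | Lh (CP x + CR x) x = m ∧ Lk (CP x) x = n},
          Real.exp (-w * (CR x + (∑ j ∈ range m, BH j x) + ∑ j ∈ range n, BK j x)) ∂μ =
        (βH w) ^ m * (βK w) ^ n *
          ∫ x in {x | Lh (CP x + CR x) x = m ∧ Lk (CP x) x = n},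
            Real.exp (-w * CR x) ∂μ)
    (ω : ℝ) (hω : 0 < ω) (hne : ω ≠ lK * (1 - βK ω)) :
    ∫ x, Real.exp (-ω * (CR x +
        (∑ j ∈ range (Lh (CP x + CR x) x), BH j x) +
        ∑ j ∈ range (Lk (CP x) x), BK j x)) ∂μ =
      (γ (lH * (1 - βH ω) + lK * (1 - βK ω)) - γ (ω + lH * (1 - βH ω))) /
        ((ω - lK * (1 - βK ω)) * EC) := by
  classical
  -- abbreviations
  set βh := βH ω with hβhdef
  set βk := βK ω with hβkdef
  -- bounds on βh, βk
  have hβh0 : 0 ≤ βh := by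
    rw [hβhdef, ← hβH 0 ω hω.le]
    exact integral_nonneg fun x => (Real.exp_pos _).le
  have hβk0 : 0 ≤ βk := by
    rw [hβkdef, ← hβK 0 ω hω.le]
    exact integral_nonneg fun x => (Real.exp_pos _).le
  have hβh1 : βh ≤ 1 := by
    rw [hβhdef, ← hβH 0 ω hω.le]
    have hint : Integrable (fun x => Real.exp (-ω * BH 0 x)) μ := by
      refine (integrable_const (1 : ℝ)).mono'
        (((hBH 0).const_mul (-ω)).exp).aestronglyMeasurable (ae_of_all _ fun x => ?_)
      rw [Real.norm_eq_abs, abs_of_pos (Real.exp_pos _)]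
      exact myexp_le_one (by nlinarith [hBHnn 0 x])
    calc ∫ x, Real.exp (-ω * BH 0 x) ∂μ ≤ ∫ _x, (1 : ℝ) ∂μ := by
          refine integral_mono hint (integrable_const 1) fun x => ?_
          exact myexp_le_one (by nlinarith [hBHnn 0 x])
      _ = 1 := by simp
  have hβk1 : βk ≤ 1 := by
    rw [hβkdef, ← hβK 0 ω hω.le]
    have hint : Integrable (fun x => Real.exp (-ω * BK 0 x)) μ := by
      refine (integrable_const (1 : ℝ)).mono'
        (((hBK 0).const_mul (-ω)).exp).aestronglyMeasurable (ae_of_all _ fun x => ?_)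
      rw [Real.norm_eq_abs, abs_of_pos (Real.exp_pos _)]
      exact myexp_le_one (by nlinarith [hBKnn 0 x])
    calc ∫ x, Real.exp (-ω * BK 0 x) ∂μ ≤ ∫ _x, (1 : ℝ) ∂μ := by
          refine integral_mono hint (integrable_const 1) fun x => ?_
          exact myexp_le_one (by nlinarith [hBKnn 0 x])
      _ = 1 := by simp
  -- the partition sets
  set A : ℕ × ℕ → Set Ω :=
    fun p => {x | Lh (CP x + CR x) x = p.1 ∧ Lk (CP x) x = p.2} with hAdef
  have hAcov : ∀ x : Ω, x ∈ A (Lh (CP x + CR x) x, Lk (CP x) x) := fun x => ⟨rfl, rfl⟩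
  have hAdis : ∀ p q : ℕ × ℕ, p ≠ q → ∀ x, x ∈ A p → x ∉ A q := by
    intro p q hpq x hxp hxq
    exact hpq (by rw [Prod.ext_iff, ← hxp.1, ← hxp.2, ← hxq.1, ← hxq.2]; exact ⟨rfl, rfl⟩)
  -- the poisson weight function
  set h : ℕ × ℕ → Ω → ℝ := fun p x =>
    (Real.exp (-(lH * (CP x + CR x))) * (lH * (CP x + CR x)) ^ p.1 / (Nat.factorial p.1 : ℝ)) *
    (Real.exp (-(lK * CP x)) * (lK * CP x) ^ p.2 / (Nat.factorial p.2 : ℝ)) with hhdef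
  have haux1 : ∀ x, 0 ≤ lH * (CP x + CR x) :=
    fun x => mul_nonneg hlH (add_nonneg (hCPnn x) (hCRnn x))
  have haux2 : ∀ x, 0 ≤ lK * CP x := fun x => mul_nonneg hlK.le (hCPnn x)
  have he1 : Measurable fun x => lH * (CP x + CR x) := (hCP.add hCR).const_mul lH
  have he2 : Measurable fun x => lK * CP x := hCP.const_mul lK
  have hhm : ∀ p, Measurable (h p) := fun p =>
    (((he1.neg.exp.mul (he1.pow_const p.1)).div_const _).mul
      ((he2.neg.exp.mul (he2.pow_const p.2)).div_const _))
  have hh0 : ∀ p x, 0 ≤ h p x :=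
    fun p x => mul_nonneg (pois_nonneg (haux1 x) p.1) (pois_nonneg (haux2 x) p.2)
  have hh1 : ∀ p x, h p x ≤ 1 := fun p x =>
    mul_le_one₀ (pois_le_one (haux1 x) p.1) (pois_nonneg (haux2 x) p.2)
      (pois_le_one (haux2 x) p.2)
  have hhint : ∀ p, Integrable (h p) μ := by
    intro p
    refine (integrable_const (1 : ℝ)).mono' (hhm p).aestronglyMeasurable (ae_of_all _ fun x => ?_)
    rw [Real.norm_eq_abs, abs_of_nonneg (hh0 p x)]
    exact hh1 p x
  -- measure of A p
  have hμA : ∀ p : ℕ × ℕ, μ (A p) = ENNReal.ofReal (∫ x, h p x ∂μ) := by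
    intro p
    have h1 := hPoisson p.1 p.2 (fun _ _ => 1) measurable_const
      (fun _ _ => ⟨zero_le_one, le_rfl⟩)
    simp only [one_mul] at h1
    have h2 : ∫ x in {x | Lh (CP x + CR x) x = p.1 ∧ Lk (CP x) x = p.2}, (1 : ℝ) ∂μ
        = (μ (A p)).toReal := by
      rw [setIntegral_const]
      simp [hAdef]; rfl
    rw [h2] at h1
    simp only [hhdef]
    rw [← h1, ENNReal.ofReal_toReal (measure_ne_top μ _)]
  -- total mass of the pieces
  have hsumμA : ∑' p : ℕ × ℕ, μ (A p) = 1 := by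
    have h1 : ∀ p : ℕ × ℕ, μ (A p) = ∫⁻ x, ENNReal.ofReal (h p x) ∂μ := by
      intro p
      rw [hμA p, ofReal_integral_eq_lintegral_ofReal (hhint p) (ae_of_all _ (hh0 p))]
    rw [tsum_congr h1, ← lintegral_tsum (fun p => ((hhm p).ennreal_ofReal).aemeasurable)]
    have h2 : ∀ x, ∑' p : ℕ × ℕ, ENNReal.ofReal (h p x) = 1 := by
      intro x
      have hs : Summable (fun p : ℕ × ℕ => h p x) := by
        refine (pois_prod_summable 1 1 (lH * (CP x + CR x)) (lK * CP x)).congr fun p => ?_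
        simp [hhdef]
      rw [← ENNReal.ofReal_tsum_of_nonneg (fun p => hh0 p x) hs]
      have h4 := pois_prod_tsum 1 1 (lH * (CP x + CR x)) (lK * CP x)
      simp only [one_pow, one_mul, sub_self, mul_zero, neg_zero, Real.exp_zero, mul_one] at h4
      have h3 : ∑' p : ℕ × ℕ, h p x = 1 := by
        simp only [hhdef]
        exact h4
      rw [h3, ENNReal.ofReal_one]
    simp only [h2]
    simp
  -- measurable hulls
  set T : ℕ × ℕ → Set Ω := fun p => toMeasurable μ (A p) with hTdef
  have hTm : ∀ p, MeasurableSet (T p) := fun p => measurableSet_toMeasurable μ (A p)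
  have hAT : ∀ p, A p ⊆ T p := fun p => subset_toMeasurable μ (A p)
  have hμT : ∀ p, μ (T p) = μ (A p) := fun p => measure_toMeasurable (A p)
  have hcovT : ∀ x : Ω, ∃ p, x ∈ T p := fun x =>
    ⟨(Lh (CP x + CR x) x, Lk (CP x) x), hAT _ (hAcov x)⟩
  have hsumμT : ∑' p : ℕ × ℕ, μ (T p) = 1 := by
    rw [tsum_congr hμT]; exact hsumμA
  -- pairwise a.e. disjointness of hulls
  have hTT : ∀ p q : ℕ × ℕ, p ≠ q → μ (T p ∩ T q) = 0 := by
    intro p q hpq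
    set R : ℝ≥0∞ := ∑' r : ℕ × ℕ, (if r = q then 0 else if r = p then 0 else μ (T r)) with hRdef
    have hRle : R ≤ 1 := by
      rw [hRdef, ← hsumμT]
      refine ENNReal.tsum_le_tsum fun r => ?_
      split_ifs <;> simp
    have hRne : R ≠ ⊤ := (lt_of_le_of_lt hRle ENNReal.one_lt_top).ne
    have h1 : (1 : ℝ≥0∞) = μ (T p) + (μ (T q) + R) := by
      rw [← hsumμT, ENNReal.tsum_eq_add_tsum_ite p, ENNReal.tsum_eq_add_tsum_ite q,
        if_neg (Ne.symm hpq), hRdef]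
      exact congrArg _ (congrArg _ (tsum_congr fun r => by split_ifs <;> rfl))
    have h2 : (1 : ℝ≥0∞) ≤ μ (T p ∪ T q) + R := by
      have hcov2 : (Set.univ : Set Ω) ⊆ (T p ∪ T q) ∪
          ⋃ r : ℕ × ℕ, (if r = q then (∅ : Set Ω) else if r = p then ∅ else T r) := by
        intro x _
        obtain ⟨r, hr⟩ := hcovT x
        by_cases h1' : r = p
        · exact Set.mem_union_left _ (Set.mem_union_left _ (h1' ▸ hr))
        · by_cases h2' : r = q
          · exact Set.mem_union_left _ (Set.mem_union_right _ (h2' ▸ hr))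
          · refine Set.mem_union_right _ (Set.mem_iUnion.2 ⟨r, ?_⟩)
            simp only [if_neg h2', if_neg h1']
            exact hr
      calc (1 : ℝ≥0∞) = μ Set.univ := measure_univ.symm
        _ ≤ μ ((T p ∪ T q) ∪
            ⋃ r : ℕ × ℕ, (if r = q then (∅ : Set Ω) else if r = p then ∅ else T r)) :=
          measure_mono hcov2
        _ ≤ μ (T p ∪ T q) +
            μ (⋃ r : ℕ × ℕ, (if r = q then (∅ : Set Ω) else if r = p then ∅ else T r)) :=
          measure_union_le _ _
        _ ≤ μ (T p ∪ T q) +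
            ∑' r : ℕ × ℕ, μ (if r = q then (∅ : Set Ω) else if r = p then ∅ else T r) :=
          add_le_add le_rfl (measure_iUnion_le _)
        _ = μ (T p ∪ T q) + R := by
            rw [hRdef]
            congr 1
            refine tsum_congr fun r => ?_
            split_ifs <;> simp
    have h3 : μ (T p ∪ T q) + μ (T p ∩ T q) = μ (T p) + μ (T q) :=
      measure_union_add_inter _ (hTm q)
    have h4 : (μ (T p ∪ T q) + R) + μ (T p ∩ T q) ≤ (μ (T p ∪ T q) + R) + 0 := by
      rw [add_zero]
      calc (μ (T p ∪ T q) + R) + μ (T p ∩ T q)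
          = (μ (T p ∪ T q) + μ (T p ∩ T q)) + R := by ring
        _ = (μ (T p) + μ (T q)) + R := by rw [h3]
        _ = 1 := by rw [h1]; ring
        _ ≤ μ (T p ∪ T q) + R := h2
    have h5 := ENNReal.le_of_add_le_add_left
      (ENNReal.add_ne_top.2 ⟨measure_ne_top μ _, hRne⟩) h4
    exact le_antisymm (by simpa using h5) zero_le
  -- the cleaned-up partition
  set D : ℕ × ℕ → Set Ω := fun p => T p \ ⋃ q : {q : ℕ × ℕ // q ≠ p}, T q with hDdef
  have hDm : ∀ p, MeasurableSet (D p) :=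
    fun p => (hTm p).diff (MeasurableSet.iUnion fun q => hTm q)
  have hDT : ∀ p, D p ⊆ T p := fun p => Set.diff_subset
  have hDA : ∀ p, D p ⊆ A p := by
    intro p x hx
    obtain ⟨hx1, hx2⟩ := hx
    have hmem := hAcov x
    set p₀ := (Lh (CP x + CR x) x, Lk (CP x) x) with hp₀
    by_cases hpp : p₀ = p
    · rw [← hpp]; exact hmem
    · exact absurd (Set.mem_iUnion.2 ⟨⟨p₀, hpp⟩, hAT p₀ hmem⟩) hx2
  have hTD0 : ∀ p, μ (T p \ D p) = 0 := by
    intro p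
    have hsub : T p \ D p ⊆ ⋃ q : {q : ℕ × ℕ // q ≠ p}, (T p ∩ T q) := by
      intro x hx
      obtain ⟨hx1, hx2⟩ := hx
      have : x ∈ ⋃ q : {q : ℕ × ℕ // q ≠ p}, T (q : ℕ × ℕ) := by
        by_contra hcon
        exact hx2 ⟨hx1, hcon⟩
      obtain ⟨q, hq⟩ := Set.mem_iUnion.1 this
      exact Set.mem_iUnion.2 ⟨q, ⟨hx1, hq⟩⟩
    refine le_antisymm (le_trans (measure_mono hsub) ?_) zero_le
    refine le_trans (measure_iUnion_le _) ?_
    have : ∀ q : {q : ℕ × ℕ // q ≠ p}, μ (T p ∩ T (q : ℕ × ℕ)) = 0 :=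
      fun q => hTT p q (Ne.symm q.2)
    rw [tsum_congr this, tsum_zero]
  have hDrestr : ∀ p, μ.restrict (A p) = μ.restrict (D p) := by
    intro p
    have hae : D p =ᵐ[μ] T p := by
      rw [ae_eq_set]
      constructor
      · exact measure_mono_null (fun x hx => (hx.2 (hDT p hx.1)).elim) (measure_empty (μ := μ))
      · exact hTD0 p
    have h1 : μ.restrict (D p) = μ.restrict (T p) := Measure.restrict_congr_set hae
    refine le_antisymm ?_ (Measure.restrict_mono (hDA p) le_rfl)
    calc μ.restrict (A p) ≤ μ.restrict (T p) := Measure.restrict_mono (hAT p) le_rfl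
      _ = μ.restrict (D p) := h1.symm
  have hDdis : Pairwise (Function.onFun Disjoint D) := by
    intro p q hpq
    refine Set.disjoint_left.2 fun x hxp hxq => ?_
    exact hAdis p q hpq x (hDA p hxp) (hDA q hxq)
  have hDcov : μ ((⋃ p : ℕ × ℕ, D p)ᶜ) = 0 := by
    have hsub : (⋃ p : ℕ × ℕ, D p)ᶜ ⊆ ⋃ p : ℕ × ℕ, (T p \ D p) := by
      intro x hx
      obtain ⟨p, hp⟩ := hcovT x
      refine Set.mem_iUnion.2 ⟨p, hp, fun hD => ?_⟩
      exact hx (Set.mem_iUnion.2 ⟨p, hD⟩)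
    refine le_antisymm (le_trans (measure_mono hsub) ?_) zero_le
    refine le_trans (measure_iUnion_le _) ?_
    rw [tsum_congr hTD0, tsum_zero]
  -- the fixed-count integrands
  set Fp : ℕ × ℕ → Ω → ℝ := fun p x =>
    Real.exp (-ω * (CR x + (∑ j ∈ range p.1, BH j x) + ∑ j ∈ range p.2, BK j x)) with hFpdef
  have hFpm : ∀ p, Measurable (Fp p) := by
    intro p
    apply Real.measurable_exp.comp
    apply Measurable.const_mul
    exact (hCR.add (Finset.measurable_sum _ fun j _ => hBH j)).add
      (Finset.measurable_sum _ fun j _ => hBK j)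
  have hFp0 : ∀ p x, 0 ≤ Fp p x := fun p x => (Real.exp_pos _).le
  have hFp1 : ∀ p x, Fp p x ≤ 1 := by
    intro p x
    rw [Real.exp_le_one_iff]
    have h1 : 0 ≤ CR x + (∑ j ∈ range p.1, BH j x) + ∑ j ∈ range p.2, BK j x :=
      add_nonneg (add_nonneg (hCRnn x) (Finset.sum_nonneg fun j _ => hBHnn j x))
        (Finset.sum_nonneg fun j _ => hBKnn j x)
    nlinarith
  -- measurable version of the integrand
  set G : Ω → ℝ := fun x =>
    (∑' p : ℕ × ℕ, (D p).indicator (fun y => ENNReal.ofReal (Fp p y)) x).toReal with hGdef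
  have hGm : Measurable G :=
    (Measurable.ennreal_tsum fun p => ((hFpm p).ennreal_ofReal).indicator (hDm p)).ennreal_toReal
  have hGD : ∀ p, ∀ x ∈ D p, G x = Fp p x := by
    intro p x hx
    have h1 : ∑' q : ℕ × ℕ, (D q).indicator (fun y => ENNReal.ofReal (Fp q y)) x
        = ENNReal.ofReal (Fp p x) := by
      rw [tsum_eq_single p]
      · rw [Set.indicator_of_mem hx]
      · intro q hq
        apply Set.indicator_of_notMem
        intro hxq
        exact hAdis q p hq x (hDA q hxq) (hDA p hx)
    rw [hGdef]; simp only [h1, ENNReal.toReal_ofReal (hFp0 p x)]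
  have hGout : ∀ x, x ∉ (⋃ p : ℕ × ℕ, D p) → G x = 0 := by
    intro x hx
    have h1 : ∀ p : ℕ × ℕ, (D p).indicator (fun y => ENNReal.ofReal (Fp p y)) x = 0 := by
      intro p
      exact Set.indicator_of_notMem (fun hxp => hx (Set.mem_iUnion.2 ⟨p, hxp⟩)) _
    rw [hGdef]; simp [tsum_congr h1]
  have hG0 : ∀ x, 0 ≤ G x := fun x => ENNReal.toReal_nonneg
  have hG1 : ∀ x, G x ≤ 1 := by
    intro x
    by_cases hx : x ∈ ⋃ p : ℕ × ℕ, D p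
    · obtain ⟨p, hp⟩ := Set.mem_iUnion.1 hx
      rw [hGD p x hp]; exact hFp1 p x
    · rw [hGout x hx]; exact zero_le_one
  have hGint : Integrable G μ := by
    refine (integrable_const (1 : ℝ)).mono' hGm.aestronglyMeasurable (ae_of_all _ fun x => ?_)
    rw [Real.norm_eq_abs, abs_of_nonneg (hG0 x)]
    exact hG1 x
  -- the original integrand agrees a.e. with G
  have hFG : (fun x => Real.exp (-ω * (CR x +
        (∑ j ∈ range (Lh (CP x + CR x) x), BH j x) +
        ∑ j ∈ range (Lk (CP x) x), BK j x))) =ᵐ[μ] G := by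
    have hsub : {x | ¬ (Real.exp (-ω * (CR x +
        (∑ j ∈ range (Lh (CP x + CR x) x), BH j x) +
        ∑ j ∈ range (Lk (CP x) x), BK j x)) = G x)} ⊆ (⋃ p : ℕ × ℕ, D p)ᶜ := by
      intro x hx hmem
      apply hx
      obtain ⟨p, hp⟩ := Set.mem_iUnion.1 hmem
      have hA := hDA p hp
      rw [hGD p x hp, hFpdef]
      simp only [hA.1, hA.2]
    exact measure_mono_null hsub hDcov
  -- a.e. the union of the D's is everything
  have hUD_ae : (⋃ p : ℕ × ℕ, D p) =ᵐ[μ] (Set.univ : Set Ω) := by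
    rw [ae_eq_set]
    constructor
    · exact measure_mono_null (fun x hx => (hx.2 (Set.mem_univ x)).elim)
        (measure_empty (μ := μ))
    · have e : (Set.univ : Set Ω) \ (⋃ p : ℕ × ℕ, D p) = (⋃ p : ℕ × ℕ, D p)ᶜ := by
        simp [Set.diff_eq]
      rw [e]; exact hDcov
  -- exponents
  set ωP : ℝ := lH * (1 - βh) + lK * (1 - βk) with hωPdef
  set ωR : ℝ := ω + lH * (1 - βh) with hωRdef
  have hωP0 : 0 ≤ ωP := by
    rw [hωPdef]
    exact add_nonneg (mul_nonneg hlH (by linarith)) (mul_nonneg hlK.le (by linarith))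
  have hωR0 : 0 ≤ ωR := by
    rw [hωRdef]
    exact add_nonneg hω.le (mul_nonneg hlH (by linarith))
  have hωPR : ωP ≠ ωR := by
    rw [hωPdef, hωRdef]
    intro hcon
    exact hne (by linarith)
  -- the summands after conditioning
  set f : ℕ × ℕ → Ω → ℝ := fun p x => βh ^ p.1 * βk ^ p.2 *
    (Real.exp (-ω * CR x) *
      (Real.exp (-(lH * (CP x + CR x))) * (lH * (CP x + CR x)) ^ p.1 / (Nat.factorial p.1 : ℝ)) *
      (Real.exp (-(lK * CP x)) * (lK * CP x) ^ p.2 / (Nat.factorial p.2 : ℝ))) with hfdef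
  have hfm : ∀ p, Measurable (f p) := by
    intro p
    exact (((hCR.const_mul (-ω)).exp.mul
        ((he1.neg.exp.mul (he1.pow_const p.1)).div_const _)).mul
      ((he2.neg.exp.mul (he2.pow_const p.2)).div_const _)).const_mul _
  have hf0 : ∀ p x, 0 ≤ f p x := by
    intro p x
    exact mul_nonneg (mul_nonneg (pow_nonneg hβh0 _) (pow_nonneg hβk0 _))
      (mul_nonneg (mul_nonneg (Real.exp_pos _).le (pois_nonneg (haux1 x) p.1))
        (pois_nonneg (haux2 x) p.2))
  have hfsumm : ∀ x, Summable (fun p : ℕ × ℕ => f p x) := by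
    intro x
    refine ((pois_prod_summable βh βk (lH * (CP x + CR x)) (lK * CP x)).mul_left
      (Real.exp (-ω * CR x))).congr fun p => ?_
    rw [hfdef]; ring
  have hptw : ∀ x, ∑' p : ℕ × ℕ, f p x = Real.exp (-ωP * CP x - ωR * CR x) := by
    intro x
    have h1 : ∀ p : ℕ × ℕ, f p x = Real.exp (-ω * CR x) *
        ((βh ^ p.1 * (Real.exp (-(lH * (CP x + CR x))) *
            (lH * (CP x + CR x)) ^ p.1 / (Nat.factorial p.1 : ℝ))) *
         (βk ^ p.2 * (Real.exp (-(lK * CP x)) *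
            (lK * CP x) ^ p.2 / (Nat.factorial p.2 : ℝ)))) := by
      intro p; rw [hfdef]; ring
    rw [tsum_congr h1, tsum_mul_left, pois_prod_tsum, ← Real.exp_add, ← Real.exp_add,
      hωPdef, hωRdef]
    congr 1
    ring
  have hf_lint : ∑' p : ℕ × ℕ, ∫⁻ x, (‖f p x‖₊ : ℝ≥0∞) ∂μ ≠ ⊤ := by
    have h1 : ∀ p : ℕ × ℕ, (∫⁻ x, (‖f p x‖₊ : ℝ≥0∞) ∂μ)
        = ∫⁻ x, ENNReal.ofReal (f p x) ∂μ := by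
      intro p
      refine lintegral_congr fun x => ?_
      exact Real.enorm_eq_ofReal (hf0 p x)
    rw [tsum_congr h1, ← lintegral_tsum (fun p => ((hfm p).ennreal_ofReal).aemeasurable)]
    have h3 : (∫⁻ x, ∑' p : ℕ × ℕ, ENNReal.ofReal (f p x) ∂μ) ≤ 1 := by
      have hb : ∀ x, (∑' p : ℕ × ℕ, ENNReal.ofReal (f p x)) ≤ 1 := by
        intro x
        rw [← ENNReal.ofReal_tsum_of_nonneg (fun p => hf0 p x) (hfsumm x), hptw x]
        refine ENNReal.ofReal_le_one.2 (myexp_le_one ?_)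
        nlinarith [mul_nonneg hωP0 (hCPnn x), mul_nonneg hωR0 (hCRnn x)]
      calc (∫⁻ x, ∑' p : ℕ × ℕ, ENNReal.ofReal (f p x) ∂μ) ≤ ∫⁻ _x, 1 ∂μ :=
            lintegral_mono hb
        _ = 1 := by simp
    exact ne_top_of_le_ne_top ENNReal.one_ne_top h3
  -- the g function for hPoisson
  have hgm : Measurable (Function.uncurry fun _ u : ℝ => Real.exp (-ω * max u 0)) :=
    ((measurable_snd.max measurable_const).const_mul (-ω)).exp
  have hgb : ∀ t u : ℝ, 0 ≤ (fun _ u : ℝ => Real.exp (-ω * max u 0)) t u ∧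
      (fun _ u : ℝ => Real.exp (-ω * max u 0)) t u ≤ 1 := by
    intro t u
    refine ⟨(Real.exp_pos _).le, myexp_le_one ?_⟩
    nlinarith [mul_nonneg hω.le (le_max_right u (0 : ℝ))]
  -- main computation
  calc ∫ x, Real.exp (-ω * (CR x + (∑ j ∈ range (Lh (CP x + CR x) x), BH j x) +
          ∑ j ∈ range (Lk (CP x) x), BK j x)) ∂μ
      = ∫ x, G x ∂μ := integral_congr_ae hFG
    _ = ∫ x in (⋃ p : ℕ × ℕ, D p), G x ∂μ := by
        rw [← setIntegral_univ]
        exact (setIntegral_congr_set hUD_ae).symm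
    _ = ∑' p : ℕ × ℕ, ∫ x in D p, G x ∂μ := integral_iUnion hDm hDdis hGint.integrableOn
    _ = ∑' p : ℕ × ℕ, ∫ x in A p, Fp p x ∂μ := by
        refine tsum_congr fun p => ?_
        have e1 : ∫ x in D p, G x ∂μ = ∫ x in D p, Fp p x ∂μ :=
          setIntegral_congr_fun (hDm p) (hGD p)
        rw [e1, hDrestr p]
    _ = ∑' p : ℕ × ℕ, (βh ^ p.1 * βk ^ p.2 * ∫ x in A p, Real.exp (-ω * CR x) ∂μ) := by
        refine tsum_congr fun p => ?_
        exact hBindep p.1 p.2 ω hω.le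
    _ = ∑' p : ℕ × ℕ, ∫ x, f p x ∂μ := by
        refine tsum_congr fun p => ?_
        have hP := hPoisson p.1 p.2 (fun _ u : ℝ => Real.exp (-ω * max u 0)) hgm hgb
        have key : ∫ x in A p, Real.exp (-ω * CR x) ∂μ
            = ∫ x, Real.exp (-ω * CR x) *
              (Real.exp (-(lH * (CP x + CR x))) *
                (lH * (CP x + CR x)) ^ p.1 / (Nat.factorial p.1 : ℝ)) *
              (Real.exp (-(lK * CP x)) * (lK * CP x) ^ p.2 / (Nat.factorial p.2 : ℝ)) ∂μ := by
          have e1 : ∫ x in A p, Real.exp (-ω * CR x) ∂μ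
              = ∫ x in A p, Real.exp (-ω * max (CR x) 0) ∂μ :=
            integral_congr_ae (ae_of_all _ fun x => by simp [max_eq_left (hCRnn x)])
          have e2 : (∫ x, Real.exp (-ω * max (CR x) 0) *
                (Real.exp (-(lH * (CP x + CR x))) *
                  (lH * (CP x + CR x)) ^ p.1 / (Nat.factorial p.1 : ℝ)) *
                (Real.exp (-(lK * CP x)) * (lK * CP x) ^ p.2 / (Nat.factorial p.2 : ℝ)) ∂μ)
              = ∫ x, Real.exp (-ω * CR x) *
                (Real.exp (-(lH * (CP x + CR x))) *
                  (lH * (CP x + CR x)) ^ p.1 / (Nat.factorial p.1 : ℝ)) *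
                (Real.exp (-(lK * CP x)) * (lK * CP x) ^ p.2 / (Nat.factorial p.2 : ℝ)) ∂μ :=
            integral_congr_ae (ae_of_all _ fun x => by simp [max_eq_left (hCRnn x)])
          rw [e1]
          exact hP.trans e2
        rw [key, ← integral_const_mul]
    _ = ∫ x, ∑' p : ℕ × ℕ, f p x ∂μ :=
        (integral_tsum (fun p => (hfm p).aestronglyMeasurable) hf_lint).symm
    _ = ∫ x, Real.exp (-ωP * CP x - ωR * CR x) ∂μ :=
        integral_congr_ae (ae_of_all _ fun x => by simpa using hptw x)
    _ = (γ ωP - γ ωR) / ((ωR - ωP) * EC) := hjoint ωP ωR hωP0 hωR0 hωPR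
    _ = (γ ωP - γ ωR) / ((ω - lK * (1 - βk)) * EC) := by
        rw [show ωR - ωP = ω - lK * (1 - βk) from by rw [hωPdef, hωRdef]; ring]
end

section
/- Suppose the LST of the waiting time of a gated-priority customer is given for $\omega > 0$ by $E[e^{-\omega W_{ik}}] = \frac{\gamma(\lambda_H(1-\beta_H(\omega)) + \lambda_k(1-\beta_k(\omega))) - \gamma(\omega + \lambda_H(1-\beta_H(\omega)))}{[\omega - \lambda_k(1-\beta_k(\omega))]E[C]}$, where $\gamma$, $\beta_H$, $\beta_k$ are twice continuously differentiable LSTs at $0$ with $-\gamma'(0) = E[C]$, $\gamma''(0) = E[C^2]$, $-\beta_H'(0) = E[B_H]$, $-\beta_k'(0) = E[B_k]$, and set $\rho_H = \lambda_H E[B_H]$, $\rho_k = \lambda_k E[B_k]$. Then $E[W_{ik}] = (1 + 2\rho_H + \rho_k)\frac{E[C^2]}{2E[C]}$. -/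
open MeasureTheory Filter Topology Set

/-- Second-order Taylor with Lagrange remainder, two-sided version. -/
lemma aux_taylor2 {g g' g'' : ℝ → ℝ} {s : Set ℝ} (hs : IsOpen s)
    (h1 : ∀ x ∈ s, HasDerivAt g (g' x) x) (h2 : ∀ x ∈ s, HasDerivAt g' (g'' x) x)
    {a b : ℝ} (hseg : Set.Icc (min a b) (max a b) ⊆ s) :
    ∃ c ∈ Set.Icc (min a b) (max a b),
      g b = g a + g' a * (b - a) + g'' c * (b - a) ^ 2 / 2 := by
  by_cases hab : a = b
  · refine ⟨a, ?_, by simp [hab]⟩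
    subst hab; simp
  have hba : b - a ≠ 0 := sub_ne_zero.2 (Ne.symm hab)
  set A : ℝ := (g b - g a - g' a * (b - a)) / (b - a) ^ 2 with hA
  set φ : ℝ → ℝ := fun t => g b - g t - g' t * (b - t) - A * (b - t) ^ 2 with hφ
  have hφd : ∀ t ∈ s, HasDerivAt φ ((b - t) * (2 * A - g'' t)) t := by
    intro t ht
    have d1 : HasDerivAt (fun t : ℝ => b - t) (-1) t := by
      simpa using (hasDerivAt_id t).const_sub b
    have d2 : HasDerivAt (fun t => g' t * (b - t)) (g'' t * (b - t) + g' t * (-1)) t :=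
      (h2 t ht).mul d1
    have d3 := (d1.pow 2).const_mul A
    have := (((hasDerivAt_const t (g b)).sub (h1 t ht)).sub d2).sub d3
    refine this.congr_deriv ?_
    push_cast
    ring
  have hφa : φ a = 0 := by
    simp only [hφ, hA]
    field_simp
    ring
  have hφb : φ b = 0 := by simp [hφ]
  have hkey : ∃ c ∈ Set.Ioo (min a b) (max a b), (b - c) * (2 * A - g'' c) = 0 := by
    rcases lt_or_gt_of_ne hab with h | h
    · have hmin : min a b = a := min_eq_left h.le
      have hmax : max a b = b := max_eq_right h.le
      rw [hmin, hmax]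
      refine exists_hasDerivAt_eq_zero (f := φ) h ?_ (hφa.trans hφb.symm) ?_
      · intro x hx
        exact (hφd x (hseg (by rw [hmin, hmax]; exact hx))).continuousAt.continuousWithinAt
      · intro x hx
        exact hφd x (hseg (by rw [hmin, hmax]; exact Set.Ioo_subset_Icc_self hx))
    · have hmin : min a b = b := min_eq_right h.le
      have hmax : max a b = a := max_eq_left h.le
      rw [hmin, hmax]
      refine exists_hasDerivAt_eq_zero (f := φ) h ?_ (hφb.trans hφa.symm) ?_
      · intro x hx
        exact (hφd x (hseg (by rw [hmin, hmax]; exact hx))).continuousAt.continuousWithinAt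
      · intro x hx
        exact hφd x (hseg (by rw [hmin, hmax]; exact Set.Ioo_subset_Icc_self hx))
  obtain ⟨c, hc, hceq⟩ := hkey
  have hcb : b - c ≠ 0 := by
    rcases lt_or_gt_of_ne hab with h | h
    · have : c < b := by simpa [max_eq_right h.le] using hc.2
      exact sub_ne_zero.2 this.ne'
    · have : b < c := by simpa [min_eq_right h.le] using hc.1
      exact sub_ne_zero.2 this.ne
  have h2A : g'' c = 2 * A := by
    rcases mul_eq_zero.1 hceq with h | h
    · exact absurd h hcb
    · linarith
  refine ⟨c, Set.Ioo_subset_Icc_self hc, ?_⟩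
  rw [h2A, hA]
  field_simp
  ring

/-- Slope limit along a filter tending to `𝓝[≠] 0`. -/
lemma aux_slope {g : ℝ → ℝ} {k : ℝ} (hg : HasDerivAt g k 0) {v : ℝ → ℝ} {l : Filter ℝ}
    (hv : Tendsto v l (𝓝[≠] (0 : ℝ))) :
    Tendsto (fun ω => (g (v ω) - g 0) / v ω) l (𝓝 k) := by
  have h := (hasDerivAt_iff_tendsto_slope.mp hg).comp hv
  refine h.congr fun ω => ?_
  simp [Function.comp, slope_def_field]

lemma aux_abs_le {x p q : ℝ} (h1 : min p q ≤ x) (h2 : x ≤ max p q) : |x| ≤ |p| + |q| := by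
  rw [abs_le]
  rcases le_total p q with h | h
  · rw [min_eq_left h] at h1; rw [max_eq_right h] at h2
    constructor
    · nlinarith [neg_abs_le p, abs_nonneg q]
    · nlinarith [le_abs_self q, abs_nonneg p]
  · rw [min_eq_right h] at h1; rw [max_eq_left h] at h2
    constructor
    · nlinarith [neg_abs_le q, abs_nonneg p]
    · nlinarith [le_abs_self p, abs_nonneg q]

/-- Mean waiting time at a gated priority queue from the waiting-time LST: if
`E[e^{-ω W}] = (γ(λH(1-βH ω) + λk(1-βk ω)) - γ(ω + λH(1-βH ω))) / ((ω - λk(1-βk ω)) E C)`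
with `γ, βH, βk` twice continuously differentiable LSTs at `0`, `-γ'(0) = E C`,
`γ''(0) = E C²`, `-βH'(0) = E BH`, `-βk'(0) = E Bk`, `ρH = λH E BH`, `ρk = λk E Bk`, then
`E W = (1 + 2 ρH + ρk) * E C² / (2 E C)`. -/
theorem stmt_14 {Ω : Type*} [MeasurableSpace Ω] (μ : Measure Ω) [IsProbabilityMeasure μ]
    (W : Ω → ℝ) (hWmeas : Measurable W) (hWnn : ∀ x, 0 ≤ W x) (hWint : Integrable W μ)
    (γ βH βk : ℝ → ℝ)
    (hγC2 : ContDiffAt ℝ 2 γ 0) (hβHC2 : ContDiffAt ℝ 2 βH 0) (hβkC2 : ContDiffAt ℝ 2 βk 0)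
    (hγ0 : γ 0 = 1) (hβH0 : βH 0 = 1) (hβk0 : βk 0 = 1)
    (EC EC2 EBH EBk lH lk : ℝ)
    (hEC : deriv γ 0 = -EC) (hEC2 : deriv (deriv γ) 0 = EC2)
    (hEBH : deriv βH 0 = -EBH) (hEBk : deriv βk 0 = -EBk)
    (hECpos : 0 < EC) (hEC2nn : 0 ≤ EC2) (hEBHnn : 0 ≤ EBH) (hEBknn : 0 ≤ EBk)
    (hlH : 0 ≤ lH) (hlk : 0 < lk)
    (ρH ρk : ℝ) (hρH : ρH = lH * EBH) (hρk : ρk = lk * EBk)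
    (hW : ∀ ω : ℝ, 0 < ω →
      ∫ x, Real.exp (-ω * W x) ∂μ =
        (γ (lH * (1 - βH ω) + lk * (1 - βk ω)) - γ (ω + lH * (1 - βH ω))) /
          ((ω - lk * (1 - βk ω)) * EC)) :
    ∫ x, W x ∂μ = (1 + 2 * ρH + ρk) * (EC2 / (2 * EC)) := by
  set L : Filter ℝ := 𝓝[>] (0 : ℝ) with hLdef
  have hL : L ≤ 𝓝[≠] (0 : ℝ) := nhdsWithin_mono _ fun x hx => ne_of_gt hx
  have hLpos : ∀ᶠ ω in L, (0 : ℝ) < ω := eventually_mem_nhdsWithin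
  have hL0 : Tendsto (fun ω : ℝ => ω) L (𝓝 0) := tendsto_id.mono_left nhdsWithin_le_nhds
  -- abbreviations
  set f : ℝ → ℝ := fun ω => ∫ x, Real.exp (-ω * W x) ∂μ with hfdef
  set u : ℝ → ℝ := fun ω => lH * (1 - βH ω) + lk * (1 - βk ω) with hudef
  set v : ℝ → ℝ := fun ω => ω + lH * (1 - βH ω) with hvdef
  set d : ℝ → ℝ := fun ω => ω - lk * (1 - βk ω) with hddef
  -- integrability and positivity of f
  have hmeasE : ∀ ω : ℝ, Measurable fun x => Real.exp (-ω * W x) :=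
    fun ω => (hWmeas.const_mul (-ω)).exp
  have hI : ∀ ω : ℝ, 0 < ω → Integrable (fun x => Real.exp (-ω * W x)) μ := by
    intro ω hω
    refine Integrable.mono' (integrable_const 1) (hmeasE ω).aestronglyMeasurable ?_
    refine ae_of_all _ fun x => ?_
    rw [Real.norm_eq_abs, abs_of_pos (Real.exp_pos _)]
    exact Real.exp_le_one_iff.2 (by nlinarith [hWnn x])
  have hfpos : ∀ ω : ℝ, 0 < ω → 0 < f ω := by
    intro ω hω
    show (0:ℝ) < ∫ x, Real.exp (-ω * W x) ∂μ
    rw [integral_pos_iff_support_of_nonneg_ae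
      (ae_of_all _ fun x => (Real.exp_pos _).le) (hI ω hω)]
    have : Function.support (fun x => Real.exp (-ω * W x)) = Set.univ := by
      ext x; simp [Function.support, (Real.exp_pos (-ω * W x)).ne']
    rw [this]
    simp
  have hdne : ∀ ω : ℝ, 0 < ω → d ω ≠ 0 := by
    intro ω hω h0
    have h1 := hW ω hω
    have : f ω = 0 := by
      show (∫ x, Real.exp (-ω * W x) ∂μ) = 0
      rw [h1]
      show (γ (u ω) - γ (v ω)) / (d ω * EC) = 0
      rw [h0, zero_mul, div_zero]
    exact absurd this (hfpos ω hω).ne'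
  -- Step 1: (1 - f ω)/ω → ∫ W
  have hB : Tendsto (fun ω => (1 - f ω) / ω) L (𝓝 (∫ x, W x ∂μ)) := by
    have hdc : Tendsto (fun ω => ∫ x, (1 - Real.exp (-ω * W x)) / ω ∂μ) L
        (𝓝 (∫ x, W x ∂μ)) := by
      refine tendsto_integral_filter_of_dominated_convergence W ?_ ?_ hWint ?_
      · refine Eventually.of_forall fun ω => ?_
        exact ((measurable_const.sub (hmeasE ω)).div_const ω).aestronglyMeasurable
      · filter_upwards [hLpos] with ω hω
        refine ae_of_all _ fun x => ?_
        have hw := hWnn x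
        have h1 : Real.exp (-ω * W x) ≤ 1 := Real.exp_le_one_iff.2 (by nlinarith)
        have h2 : 1 - Real.exp (-ω * W x) ≤ ω * W x := by
          have := Real.add_one_le_exp (-ω * W x)
          nlinarith
        rw [Real.norm_eq_abs, abs_of_nonneg (div_nonneg (by linarith) hω.le),
          div_le_iff₀ hω]
        nlinarith
      · refine ae_of_all _ fun x => ?_
        have hder : HasDerivAt (fun t : ℝ => 1 - Real.exp (-t * W x)) (W x) 0 := by
          have h1 : HasDerivAt (fun t : ℝ => -t * W x) (-(W x)) 0 := by
            simpa using ((hasDerivAt_id (0 : ℝ)).neg.mul_const (W x))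
          have h2 := h1.exp
          have h3 := (hasDerivAt_const (0 : ℝ) (1 : ℝ)).sub h2
          simpa [Pi.sub_def] using h3
        have hs := hasDerivAt_iff_tendsto_slope.mp hder
        have := hs.comp (tendsto_id'.mpr hL)
        refine this.congr fun ω => ?_
        simp [Function.comp, slope_def_field]
    refine hdc.congr' ?_
    filter_upwards [hLpos] with ω hω
    rw [integral_div, integral_sub (integrable_const 1) (hI ω hω), integral_const]
    simp [hfdef]
  -- derivatives of βH, βk at 0
  have hβHd : HasDerivAt βH (-EBH) 0 := by
    have := (hβHC2.differentiableAt (by norm_num)).hasDerivAt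
    rwa [hEBH] at this
  have hβkd : HasDerivAt βk (-EBk) 0 := by
    have := (hβkC2.differentiableAt (by norm_num)).hasDerivAt
    rwa [hEBk] at this
  have hβHs : Tendsto (fun ω => (1 - βH ω) / ω) L (𝓝 EBH) := by
    have h := aux_slope hβHd (tendsto_id'.mpr hL)
    rw [hβH0] at h
    have := h.neg
    rw [neg_neg] at this
    refine this.congr fun ω => ?_
    simp only [id_eq]
    ring
  have hβks : Tendsto (fun ω => (1 - βk ω) / ω) L (𝓝 EBk) := by
    have h := aux_slope hβkd (tendsto_id'.mpr hL)
    rw [hβk0] at h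
    have := h.neg
    rw [neg_neg] at this
    refine this.congr fun ω => ?_
    simp only [id_eq]
    ring
  -- ratio limits
  have huω : Tendsto (fun ω => u ω / ω) L (𝓝 (ρH + ρk)) := by
    have := (hβHs.const_mul lH).add (hβks.const_mul lk)
    rw [hρH, hρk]
    refine this.congr fun ω => ?_
    simp only [hudef]
    ring
  have hvω : Tendsto (fun ω => v ω / ω) L (𝓝 (1 + ρH)) := by
    have h := hβHs.const_mul lH
    have h2 : Tendsto (fun ω : ℝ => 1 + lH * ((1 - βH ω) / ω)) L (𝓝 (1 + lH * EBH)) :=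
      tendsto_const_nhds.add h
    rw [hρH]
    refine h2.congr' ?_
    filter_upwards [hLpos] with ω hω
    simp only [hvdef]
    field_simp
  have hdω : Tendsto (fun ω => d ω / ω) L (𝓝 (1 - ρk)) := by
    have h := hβks.const_mul lk
    have h2 : Tendsto (fun ω : ℝ => 1 - lk * ((1 - βk ω) / ω)) L (𝓝 (1 - lk * EBk)) :=
      tendsto_const_nhds.sub h
    rw [hρk]
    refine h2.congr' ?_
    filter_upwards [hLpos] with ω hω
    simp only [hddef]
    field_simp
  have hu0 : Tendsto u L (𝓝 0) := by
    have := huω.mul hL0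
    rw [mul_zero] at this
    refine this.congr' ?_
    filter_upwards [hLpos] with ω hω
    field_simp
  have hv0 : Tendsto v L (𝓝 0) := by
    have := hvω.mul hL0
    rw [mul_zero] at this
    refine this.congr' ?_
    filter_upwards [hLpos] with ω hω
    field_simp
  have hρHnn : 0 ≤ ρH := by rw [hρH]; exact mul_nonneg hlH hEBHnn
  have hvpos : ∀ᶠ ω in L, 0 < v ω := by
    have h : ∀ᶠ ω in L, (1 : ℝ) / 2 < v ω / ω :=
      hvω.eventually (eventually_gt_nhds (by linarith))
    filter_upwards [h, hLpos] with ω h1 h2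
    have h3 : v ω = v ω / ω * ω := by field_simp
    rw [h3]
    nlinarith
  have hvne : Tendsto v L (𝓝[≠] (0 : ℝ)) := by
    rw [tendsto_nhdsWithin_iff]
    exact ⟨hv0, hvpos.mono fun ω h => h.ne'⟩
  -- γ is C² on an open ball around 0
  obtain ⟨t, htn, htc⟩ := hγC2.contDiffOn le_rfl (by simp)
  obtain ⟨ε, hε, hball⟩ := Metric.mem_nhds_iff.mp htn
  set s : Set ℝ := Metric.ball (0 : ℝ) ε with hsdef
  have hs : IsOpen s := Metric.isOpen_ball
  have h0s : (0 : ℝ) ∈ s := Metric.mem_ball_self hε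
  have hγs : ContDiffOn ℝ 2 γ s := htc.mono hball
  have hγ1 : ContDiffOn ℝ 1 (deriv γ) s :=
    hγs.deriv_of_isOpen hs (by exact_mod_cast le_rfl)
  have hd1 : ∀ x ∈ s, HasDerivAt γ (deriv γ x) x := fun x hx =>
    ((hγs.differentiableOn (by norm_num)).differentiableAt (hs.mem_nhds hx)).hasDerivAt
  have hd2 : ∀ x ∈ s, HasDerivAt (deriv γ) (deriv (deriv γ) x) x := fun x hx =>
    ((hγ1.differentiableOn (by norm_num)).differentiableAt (hs.mem_nhds hx)).hasDerivAt
  have hγ''cont : ContinuousAt (deriv (deriv γ)) 0 := by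
    have h := hγ1.continuousOn_deriv_of_isOpen hs (by norm_num)
    exact h.continuousAt (hs.mem_nhds h0s)
  -- slope limit of deriv γ at 0 along v
  have hγ's : Tendsto (fun ω => (deriv γ (v ω) - deriv γ 0) / v ω) L (𝓝 EC2) := by
    have hdd : HasDerivAt (deriv γ) EC2 0 := by
      have := hd2 0 h0s
      rwa [hEC2] at this
    exact aux_slope hdd hvne
  -- Taylor expansion with chosen intermediate point
  have hEx : ∀ᶠ ω in L, ∃ c, |c| ≤ |v ω| + |u ω| ∧
      γ (u ω) = γ (v ω) + deriv γ (v ω) * (u ω - v ω) +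
        deriv (deriv γ) c * (u ω - v ω) ^ 2 / 2 := by
    have h1 : ∀ᶠ ω in L, |u ω| < ε / 2 := by
      have := Metric.tendsto_nhds.mp hu0 (ε / 2) (by positivity)
      refine this.mono fun ω h => ?_
      simpa [Real.dist_eq] using h
    have h2 : ∀ᶠ ω in L, |v ω| < ε / 2 := by
      have := Metric.tendsto_nhds.mp hv0 (ε / 2) (by positivity)
      refine this.mono fun ω h => ?_
      simpa [Real.dist_eq] using h
    filter_upwards [h1, h2] with ω h1 h2
    have hseg : Set.Icc (min (v ω) (u ω)) (max (v ω) (u ω)) ⊆ s := by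
      intro x hx
      rw [hsdef, Metric.mem_ball, Real.dist_eq, sub_zero]
      have := aux_abs_le hx.1 hx.2
      linarith
    obtain ⟨c, hc, hceq⟩ := aux_taylor2 hs hd1 hd2 hseg
    exact ⟨c, aux_abs_le hc.1 hc.2, hceq⟩
  classical
  set P : ℝ → ℝ → Prop := fun ω c => |c| ≤ |v ω| + |u ω| ∧
      γ (u ω) = γ (v ω) + deriv γ (v ω) * (u ω - v ω) +
        deriv (deriv γ) c * (u ω - v ω) ^ 2 / 2 with hPdef
  set C : ℝ → ℝ := fun ω => if h : ∃ c, P ω c then h.choose else 0 with hCdef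
  have hC : ∀ᶠ ω in L, P ω (C ω) := by
    filter_upwards [hEx] with ω h
    have h' : ∃ c, P ω c := h
    simp only [hCdef, dif_pos h']
    exact h'.choose_spec
  have hC0 : Tendsto C L (𝓝 0) := by
    refine squeeze_zero_norm' (a := fun ω => |v ω| + |u ω|) ?_ ?_
    · filter_upwards [hC] with ω h
      simpa [Real.norm_eq_abs] using h.1
    · have := hv0.abs.add hu0.abs
      simpa using this
  have hγ''C : Tendsto (fun ω => deriv (deriv γ) (C ω)) L (𝓝 EC2) := by
    have := hγ''cont.tendsto.comp hC0
    rwa [hEC2] at this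
  -- the key eventual identity
  have hkey : ∀ᶠ ω in L, (1 - f ω) / ω =
      ((deriv γ (v ω) - deriv γ 0) / v ω * (v ω / ω) -
        deriv (deriv γ) (C ω) * (d ω / ω) / 2) / EC := by
    filter_upwards [hC, hLpos, hvpos] with ω hP hω hv'
    have hdne' := hdne ω hω
    have hfW : f ω = (γ (u ω) - γ (v ω)) / (d ω * EC) := hW ω hω
    have huv : u ω - v ω = -(d ω) := by
      simp only [hudef, hvdef, hddef]
      ring
    have hT := hP.2
    rw [huv] at hT
    have hfval : f ω * EC = -(deriv γ (v ω)) + deriv (deriv γ) (C ω) * d ω / 2 := by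
      rw [hfW, hT]
      field_simp
      ring
    have hvne' := hv'.ne'
    have hωne := hω.ne'
    have e1 : (deriv γ (v ω) - deriv γ 0) / v ω * (v ω / ω) =
        (deriv γ (v ω) + EC) / ω := by
      rw [hEC]
      field_simp
      ring
    rw [e1]
    have e2 : (deriv γ (v ω) + EC) / ω - deriv (deriv γ) (C ω) * (d ω / ω) / 2 =
        (deriv γ (v ω) + EC - deriv (deriv γ) (C ω) * d ω / 2) / ω := by
      field_simp
    rw [e2, div_div, div_eq_div_iff hωne (by positivity : (0:ℝ) < ω * EC).ne']
    linear_combination (-ω) * hfval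
  have hlim2 : Tendsto (fun ω =>
      ((deriv γ (v ω) - deriv γ 0) / v ω * (v ω / ω) -
        deriv (deriv γ) (C ω) * (d ω / ω) / 2) / EC) L
      (𝓝 ((EC2 * (1 + ρH) - EC2 * (1 - ρk) / 2) / EC)) :=
    (((hγ's.mul hvω).sub ((hγ''C.mul hdω).div_const 2)).div_const EC)
  have hmain : Tendsto (fun ω => (1 - f ω) / ω) L
      (𝓝 ((EC2 * (1 + ρH) - EC2 * (1 - ρk) / 2) / EC)) :=
    hlim2.congr' (Filter.EventuallyEq.symm hkey)
  have := tendsto_nhds_unique hB hmain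
  rw [this]
  field_simp
  ring
end
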